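/- Let n ≥ 1 and let b, b' be units of W. (i) Every g ∈ W[[u]] satisfying b·g ≡ b'·φ(g) (mod p^n) is congruent mod p^n to its constant coefficient g₀, and b·g₀ ≡ b'·F(g₀) (mod p^n). (ii) Consequently, there exists g ∈ W[[u]] with unit constant coefficient satisfying b·g ≡ b'·φ(g) (mod p^n) if and only if there exists a unit w of W with b·w ≡ b'·F(w) (mod p^n). -/

import Mathlib

open PowerSeries

/-- The Frobenius-semilinear map `φ` on `W(k)[[u]]`, sending `Σ wᵢ uⁱ` to `Σ F(wᵢ) u^{p·i}`,
where `F = WittVector.frobenius` is the Witt-vector Frobenius. -/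
noncomputable def phiPS (p : ℕ) [Fact p.Prime] {k : Type*} [CommRing k]
    (g : PowerSeries (WittVector p k)) : PowerSeries (WittVector p k) :=
  PowerSeries.mk fun j =>
    if p ∣ j then WittVector.frobenius (PowerSeries.coeff (R := WittVector p k) (j / p) g) else 0

/-- **Isomorphism criterion for multiplicative-type cyclic Breuil–Kisin modules.**
Let `W = W(k)` for `k` a perfect field of characteristic `p`, `n ≥ 1`, and `b, b' ∈ W^×`.
(i) Every `g ∈ W[[u]]` with `b·g ≡ b'·φ(g) (mod pⁿ)` (coefficientwise) is congruent
mod `pⁿ` to its constant coefficient `g₀` (all coefficients in nonzero degree are divisible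
by `pⁿ`), and `b·g₀ ≡ b'·F(g₀) (mod pⁿ)` in `W`.
(ii) Consequently such a `g` with unit constant coefficient exists iff there is a unit
`w ∈ W^×` with `b·w ≡ b'·F(w) (mod pⁿ)`. -/
theorem mult_type_cyclic_BK_iso_criterion
    (p n : ℕ) [Fact p.Prime] (hn : 1 ≤ n)
    (k : Type*) [Field k] [CharP k p] [PerfectRing k p]
    (b b' : WittVector p k) (hb : IsUnit b) (hb' : IsUnit b') :
    ((∀ g : PowerSeries (WittVector p k),
      (∀ j : ℕ, (p : WittVector p k) ^ n ∣
          coeff (R := WittVector p k) j (C (R := WittVector p k) b * g - C (R := WittVector p k) b' * phiPS p g)) →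
        ((∀ j : ℕ, j ≠ 0 → (p : WittVector p k) ^ n ∣ coeff (R := WittVector p k) j g) ∧
          (p : WittVector p k) ^ n ∣
            (b * constantCoeff (R := WittVector p k) g -
              b' * WittVector.frobenius (constantCoeff (R := WittVector p k) g))))) ∧
    ((∃ g : PowerSeries (WittVector p k),
        IsUnit (constantCoeff (R := WittVector p k) g) ∧
        ∀ j : ℕ, (p : WittVector p k) ^ n ∣
          coeff (R := WittVector p k) j (C (R := WittVector p k) b * g - C (R := WittVector p k) b' * phiPS p g)) ↔
      (∃ w : WittVector p k, IsUnit w ∧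
        (p : WittVector p k) ^ n ∣ (b * w - b' * WittVector.frobenius w))) := by
  have hp1 : 1 < p := (Fact.out : p.Prime).one_lt
  have cancel : ∀ x : WittVector p k,
      (p : WittVector p k) ^ n ∣ b * x → (p : WittVector p k) ^ n ∣ x := by
    intro x hx
    obtain ⟨u, rfl⟩ := hb
    exact (Units.dvd_mul_left).mp hx
  have part1 : ∀ g : PowerSeries (WittVector p k),
      (∀ j : ℕ, (p : WittVector p k) ^ n ∣
          coeff (R := WittVector p k) j (C (R := WittVector p k) b * g - C (R := WittVector p k) b' * phiPS p g)) →
        ((∀ j : ℕ, j ≠ 0 → (p : WittVector p k) ^ n ∣ coeff (R := WittVector p k) j g) ∧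
          (p : WittVector p k) ^ n ∣
            (b * constantCoeff (R := WittVector p k) g -
              b' * WittVector.frobenius (constantCoeff (R := WittVector p k) g))) := by
    intro g hg
    constructor
    · intro j
      induction j using Nat.strong_induction_on with
      | _ j ih =>
        intro hj
        have h := hg j
        simp only [map_sub, coeff_C_mul, phiPS, coeff_mk] at h
        by_cases hp : p ∣ j
        · rw [if_pos hp] at h
          set m := j / p with hm
          have hmj : m < j := Nat.div_lt_self (Nat.pos_of_ne_zero hj) hp1
          have hm0 : m ≠ 0 := by
            intro h0
            apply hj
            have := Nat.div_mul_cancel hp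
            rw [← this, ← hm, h0, zero_mul]
          have hdm : (p : WittVector p k) ^ n ∣ coeff m g := ih m hmj hm0
          obtain ⟨c, hc⟩ := hdm
          have hF : (p : WittVector p k) ^ n ∣ WittVector.frobenius (coeff m g) := by
            rw [hc, map_mul, map_pow, map_natCast]
            exact Dvd.intro _ rfl
          have : (p : WittVector p k) ^ n ∣ b * coeff j g := by
            have := dvd_add h (Dvd.dvd.mul_left hF b')
            simpa using this
          exact cancel _ this
        · rw [if_neg hp] at h
          apply cancel
          simpa using h
    · have h := hg 0
      simp only [map_sub, coeff_C_mul, phiPS, coeff_mk, if_pos (dvd_zero p),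
        Nat.zero_div, coeff_zero_eq_constantCoeff] at h
      exact h
  refine ⟨part1, ?_, ?_⟩
  · rintro ⟨g, hgu, hg⟩
    exact ⟨constantCoeff g, hgu, (part1 g hg).2⟩
  · rintro ⟨w, hw, hd⟩
    refine ⟨C w, by simpa using hw, ?_⟩
    intro j
    rcases eq_or_ne j 0 with rfl | hj
    · simp only [map_sub, coeff_C_mul, phiPS, coeff_mk, if_pos (dvd_zero p),
        Nat.zero_div, coeff_zero_eq_constantCoeff, constantCoeff_C]
      exact hd
    · have h1 : coeff (R := WittVector p k) j (C w) = 0 := by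
        rw [coeff_C, if_neg hj]
      have h2 : coeff (R := WittVector p k) j (phiPS p (C w)) = 0 := by
        simp only [phiPS, coeff_mk]
        by_cases hp : p ∣ j
        · rw [if_pos hp]
          have hjp : j / p ≠ 0 := by
            intro h0
            apply hj
            have := Nat.div_mul_cancel hp
            rw [← this, h0, zero_mul]
          rw [coeff_C, if_neg hjp, map_zero]
        · rw [if_neg hp]
      rw [map_sub, coeff_C_mul, coeff_C_mul, h1, h2, mul_zero, mul_zero, sub_zero]
      exact dvd_zero _
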